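/- Let 𝔤 = 𝔥 ⊕ 𝔪 be a reductive decomposition and let r : 𝔪* → 𝔪 be skew, 𝔥-equivariant, and satisfy r([α, β]_r) = p_𝔪([r α, r β]) for all α, β ∈ 𝔪*. Then: (i) r maps (𝔪*)^𝔥 into 𝔪^𝔥; (ii) for all α, β ∈ (𝔪*)^𝔥, [α, β]_r ∈ (𝔪*)^𝔥; (iii) the Jacobi identity holds: for all α, β, γ ∈ (𝔪*)^𝔥, [[α, β]_r, γ]_r + [[β, γ]_r, α]_r + [[γ, α]_r, β]_r = 0. Hence ((𝔪*)^𝔥, [·,·]_r) is a Lie algebra and α ↦ r α is a Lie algebra morphism into (𝔪^𝔥, [·,·]_𝔪). -/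

import Mathlib

/-- The projection `p_𝔪 : 𝔤 → 𝔪` along `𝔥`, for a decomposition `𝔤 = 𝔥 ⊕ 𝔪`. -/
noncomputable def pm {L : Type*} [LieRing L] [LieAlgebra ℝ L]
    (H : LieSubalgebra ℝ L) (m : Submodule ℝ L)
    (hc : IsCompl H.toSubmodule m) : L →ₗ[ℝ] m :=
  Submodule.linearProjOfIsCompl m H.toSubmodule hc.symm

/-- For `x ∈ 𝔤`, the map `𝔪 → 𝔪`, `v ↦ p_𝔪([x, v])`. -/
noncomputable def adm {L : Type*} [LieRing L] [LieAlgebra ℝ L]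
    (H : LieSubalgebra ℝ L) (m : Submodule ℝ L)
    (hc : IsCompl H.toSubmodule m) (x : L) : m →ₗ[ℝ] m :=
  pm H m hc ∘ₗ (LieAlgebra.ad ℝ L x) ∘ₗ m.subtype

/-- The bracket `[α, β]_r : u ↦ α([rβ, u]_𝔪) - β([rα, u]_𝔪)` on `𝔪*`. -/
noncomputable def bracketr {L : Type*} [LieRing L] [LieAlgebra ℝ L]
    (H : LieSubalgebra ℝ L) (m : Submodule ℝ L)
    (hc : IsCompl H.toSubmodule m) (r : Module.Dual ℝ m →ₗ[ℝ] m)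
    (α β : Module.Dual ℝ m) : Module.Dual ℝ m :=
  α ∘ₗ adm H m hc (r β : L) - β ∘ₗ adm H m hc (r α : L)

/-- `r : 𝔪* → 𝔪` is skew: `ξ(rη) = -η(rξ)`. -/
def rIsSkew {L : Type*} [LieRing L] [LieAlgebra ℝ L]
    (m : Submodule ℝ L) (r : Module.Dual ℝ m →ₗ[ℝ] m) : Prop :=
  ∀ η ξ : Module.Dual ℝ m, ξ (r η) = - η (r ξ)

/-- `r : 𝔪* → 𝔪` is `𝔥`-equivariant: `r(α ∘ (ad u)|_𝔪) = -[u, rα]` for `u ∈ 𝔥`. -/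
def rIsEquivariant {L : Type*} [LieRing L] [LieAlgebra ℝ L]
    (H : LieSubalgebra ℝ L) (m : Submodule ℝ L)
    (hc : IsCompl H.toSubmodule m) (r : Module.Dual ℝ m →ₗ[ℝ] m) : Prop :=
  ∀ u ∈ H, ∀ α : Module.Dual ℝ m,
    (r (α ∘ₗ adm H m hc u) : L) = -⁅u, (r α : L)⁆

/-- `r` satisfies the Yang–Baxter-type equation `r([α,β]_r) = p_𝔪([rα, rβ])`. -/
def rIsYB {L : Type*} [LieRing L] [LieAlgebra ℝ L]
    (H : LieSubalgebra ℝ L) (m : Submodule ℝ L)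
    (hc : IsCompl H.toSubmodule m) (r : Module.Dual ℝ m →ₗ[ℝ] m) : Prop :=
  ∀ α β : Module.Dual ℝ m,
    r (bracketr H m hc r α β) = pm H m hc ⁅(r α : L), (r β : L)⁆

/-- The invariants `(𝔪*)^𝔥 = {α : α([u,v]) = 0 for all u ∈ 𝔥, v ∈ 𝔪}`. -/
def inDualInv {L : Type*} [LieRing L] [LieAlgebra ℝ L]
    (H : LieSubalgebra ℝ L) (m : Submodule ℝ L)
    (hc : IsCompl H.toSubmodule m) (α : Module.Dual ℝ m) : Prop :=
  ∀ u ∈ H, ∀ v : m, α (adm H m hc u v) = 0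

/-- The invariants `𝔪^𝔥 = {w ∈ 𝔪 : [u,w] = 0 for all u ∈ 𝔥}`. -/
def inMInv {L : Type*} [LieRing L] [LieAlgebra ℝ L]
    (H : LieSubalgebra ℝ L) (m : Submodule ℝ L) (w : m) : Prop :=
  ∀ u ∈ H, ⁅u, (w : L)⁆ = 0


section helper
variable {L : Type*} [LieRing L] [LieAlgebra ℝ L]
  (H : LieSubalgebra ℝ L) (m : Submodule ℝ L) (hc : IsCompl H.toSubmodule m)

lemma pm_apply_mem {x : L} (hx : x ∈ m) : pm H m hc x = ⟨x, hx⟩ :=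
  Submodule.linearProjOfIsCompl_apply_left hc.symm ⟨x, hx⟩

lemma pm_apply_H {x : L} (hx : x ∈ H) : pm H m hc x = 0 :=
  Submodule.projectionOnto_apply_of_mem_right hc.symm hx

lemma sub_pm_mem (x : L) : x - (pm H m hc x : L) ∈ H := by
  have h0 : pm H m hc (x - (pm H m hc x : L)) = 0 := by
    rw [map_sub, pm_apply_mem H m hc (pm H m hc x).2]; simp
  exact (Submodule.linearProjOfIsCompl_apply_eq_zero_iff hc.symm).1 h0

lemma adm_apply (x : L) (v : m) : adm H m hc x v = pm H m hc ⁅x, (v : L)⁆ := rfl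

/-- If `x ∈ 𝔪^𝔥`, then `p_𝔪 ⁅x, z⁆ = adm x (p_𝔪 z)` for all `z`. -/
lemma pm_lie_inMInv {x : m} (hx : inMInv H m x) (z : L) :
    pm H m hc ⁅(x : L), z⁆ = adm H m hc (x : L) (pm H m hc z) := by
  have hz : z = (z - (pm H m hc z : L)) + (pm H m hc z : L) := by abel
  rw [adm_apply]
  conv_lhs => rw [hz]
  rw [lie_add, map_add]
  have h1 : ⁅(x : L), z - (pm H m hc z : L)⁆ = 0 := by
    rw [← lie_skew, hx _ (sub_pm_mem H m hc z), neg_zero]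
  rw [h1, map_zero, zero_add]

/-- If `u ∈ 𝔥`, then `p_𝔪 ⁅u, z⁆ = adm u (p_𝔪 z)` for all `z`. -/
lemma pm_lie_H {u : L} (hu : u ∈ H) (z : L) :
    pm H m hc ⁅u, z⁆ = adm H m hc u (pm H m hc z) := by
  have hz : z = (z - (pm H m hc z : L)) + (pm H m hc z : L) := by abel
  rw [adm_apply]
  conv_lhs => rw [hz]
  rw [lie_add, map_add]
  rw [pm_apply_H H m hc (H.lie_mem hu (sub_pm_mem H m hc z)), zero_add]

/-- key commutator lemma used for Jacobi. -/
lemma key_comm {x y : m} (hx : inMInv H m x) (hy : inMInv H m y) (u : m) :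
    adm H m hc (x : L) (adm H m hc (y : L) u) - adm H m hc (y : L) (adm H m hc (x : L) u)
      - adm H m hc ((pm H m hc ⁅(x : L), (y : L)⁆ : m) : L) u
      = adm H m hc ((⁅(x : L), (y : L)⁆ - (pm H m hc ⁅(x : L), (y : L)⁆ : L))) u := by
  have e1 : adm H m hc (x : L) (adm H m hc (y : L) u)
      = pm H m hc ⁅(x : L), ⁅(y : L), (u : L)⁆⁆ := by
    rw [pm_lie_inMInv H m hc hx ⁅(y : L), (u : L)⁆]; rfl
  have e2 : adm H m hc (y : L) (adm H m hc (x : L) u)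
      = pm H m hc ⁅(y : L), ⁅(x : L), (u : L)⁆⁆ := by
    rw [pm_lie_inMInv H m hc hy ⁅(x : L), (u : L)⁆]; rfl
  rw [e1, e2, adm_apply, adm_apply, ← map_sub, ← lie_lie, ← map_sub, ← sub_lie]
end helper

/-- for a skew, `𝔥`-equivariant solution `r` of the Yang–Baxter-type
equation, `r` maps `(𝔪*)^𝔥` to `𝔪^𝔥`, the bracket `[·,·]_r` preserves `(𝔪*)^𝔥`,
and it satisfies the Jacobi identity there. -/
theorem invariants_lie_algebra_morphism {L : Type*} [LieRing L] [LieAlgebra ℝ L]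
    [FiniteDimensional ℝ L]
    (H : LieSubalgebra ℝ L) (m : Submodule ℝ L)
    (hc : IsCompl H.toSubmodule m)
    (hred : ∀ u ∈ H, ∀ v ∈ m, ⁅u, v⁆ ∈ m)
    (r : Module.Dual ℝ m →ₗ[ℝ] m)
    (hskew : rIsSkew m r) (hequiv : rIsEquivariant H m hc r)
    (hyb : rIsYB H m hc r) :
    (∀ α : Module.Dual ℝ m, inDualInv H m hc α → inMInv H m (r α)) ∧
    (∀ α β : Module.Dual ℝ m, inDualInv H m hc α → inDualInv H m hc β →
      inDualInv H m hc (bracketr H m hc r α β)) ∧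
    (∀ α β γ : Module.Dual ℝ m,
      inDualInv H m hc α → inDualInv H m hc β → inDualInv H m hc γ →
      bracketr H m hc r (bracketr H m hc r α β) γ
        + bracketr H m hc r (bracketr H m hc r β γ) α
        + bracketr H m hc r (bracketr H m hc r γ α) β = 0) := by
  have hb : ∀ (δ ε : Module.Dual ℝ m) (w : m),
      bracketr H m hc r δ ε w
        = δ (adm H m hc (r ε : L) w) - ε (adm H m hc (r δ : L) w) := fun _ _ _ => rfl
  -- Part (i)
  have part1 : ∀ α : Module.Dual ℝ m, inDualInv H m hc α → inMInv H m (r α) := by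
    intro α hα u hu
    have hz : α ∘ₗ adm H m hc u = 0 := by
      ext v; exact hα u hu v
    have h1 := hequiv u hu α
    rw [hz, map_zero] at h1
    have h2 : (0 : L) = -⁅u, (r α : L)⁆ := by simpa using h1
    exact neg_eq_zero.mp h2.symm
  -- key commutator identity against invariant functionals
  have keyγ : ∀ (γ : Module.Dual ℝ m), inDualInv H m hc γ →
      ∀ (x y : m), inMInv H m x → inMInv H m y → ∀ u : m,
      γ (adm H m hc (x : L) (adm H m hc (y : L) u))
        - γ (adm H m hc (y : L) (adm H m hc (x : L) u))
        - γ (adm H m hc ((pm H m hc ⁅(x : L), (y : L)⁆ : m) : L) u) = 0 := by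
    intro γ hγ x y hx hy u
    have h := key_comm H m hc hx hy u
    have h2 : γ (adm H m hc (x : L) (adm H m hc (y : L) u))
        - γ (adm H m hc (y : L) (adm H m hc (x : L) u))
        - γ (adm H m hc ((pm H m hc ⁅(x : L), (y : L)⁆ : m) : L) u)
        = γ (adm H m hc ((⁅(x : L), (y : L)⁆ - (pm H m hc ⁅(x : L), (y : L)⁆ : L))) u) := by
      rw [← h]; simp
    rw [h2]
    exact hγ _ (sub_pm_mem H m hc _) u
  refine ⟨part1, ?_, ?_⟩
  · -- Part (ii)
    intro α β hα hβ u hu v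
    have hrα := part1 α hα
    have hrβ := part1 β hβ
    have swap : ∀ (x : m), inMInv H m x →
        adm H m hc (x : L) (adm H m hc u v) = adm H m hc u (adm H m hc (x : L) v) := by
      intro x hx
      have e1 : adm H m hc (x : L) (adm H m hc u v)
          = pm H m hc ⁅(x : L), ⁅u, (v : L)⁆⁆ := by
        rw [pm_lie_inMInv H m hc hx ⁅u, (v : L)⁆]; rfl
      have h0 : ⁅(x : L), u⁆ = 0 := by rw [← lie_skew, hx u hu, neg_zero]
      have hxu : ⁅(x : L), ⁅u, (v : L)⁆⁆ = ⁅u, ⁅(x : L), (v : L)⁆⁆ := by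
        have hl := lie_lie (x : L) u (v : L)
        rw [h0, zero_lie] at hl
        exact (sub_eq_zero.mp hl.symm)
      have e2 : pm H m hc ⁅u, ⁅(x : L), (v : L)⁆⁆
          = adm H m hc u (adm H m hc (x : L) v) := by
        rw [pm_lie_H H m hc hu ⁅(x : L), (v : L)⁆]; rfl
      rw [e1, hxu, e2]
    rw [hb]
    rw [swap (r β) hrβ, swap (r α) hrα, hα u hu, hβ u hu, sub_zero]
  · -- Part (iii)
    intro α β γ hα hβ hγ
    ext u
    have hrα := part1 α hα
    have hrβ := part1 β hβ
    have hrγ := part1 γ hγ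
    have k1 := keyγ γ hγ (r α) (r β) hrα hrβ u
    have k2 := keyγ α hα (r β) (r γ) hrβ hrγ u
    have k3 := keyγ β hβ (r γ) (r α) hrγ hrα u
    have hyb' : ∀ δ ε : Module.Dual ℝ m,
        r (bracketr H m hc r δ ε) = pm H m hc ⁅(r δ : L), (r ε : L)⁆ := hyb
    simp only [LinearMap.add_apply, LinearMap.zero_apply, hb, hyb']
    linarith [k1, k2, k3]
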